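/- Let P = Σ_{|ν|≤d} a_ν X^ν be an internal polynomial over *ℂ of finite (standard) degree d in n variables. Then P is a bounded polynomial (maps bounded points of *ℂⁿ to bounded points of *ℂ) if and only if every coefficient a_ν is a bounded element of *ℂ; and P is infinitesimal (maps bounded points to infinitesimal points) if and only if every coefficient a_ν is infinitesimal. -/

import Mathlib

open Filter

/-- A sequence representing a point of `*ℂ` is *bounded* if its absolute value is
`𝒰`-a.e. at most some standard natural number. -/
def BddSeq (𝒰 : Ultrafilter ℕ) (x : ℕ → ℂ) : Prop :=
  ∃ m : ℕ, ∀ᶠ i in (𝒰 : Filter ℕ), ‖x i‖ ≤ (m : ℝ)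

/-- A sequence representing a point of `*ℂ` is *infinitesimal* if its absolute value is
`𝒰`-a.e. at most `ε` for every standard `ε > 0`. -/
def InfmlSeq (𝒰 : Ultrafilter ℕ) (x : ℕ → ℂ) : Prop :=
  ∀ ε : ℝ, 0 < ε → ∀ᶠ i in (𝒰 : Filter ℕ), ‖x i‖ ≤ ε

section helpers
variable {𝒰 : Ultrafilter ℕ}

lemma BddSeq.congr' {x y : ℕ → ℂ} (h : ∀ᶠ i in (𝒰 : Filter ℕ), x i = y i)
    (hx : BddSeq 𝒰 x) : BddSeq 𝒰 y := by
  obtain ⟨m, hm⟩ := hx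
  exact ⟨m, by filter_upwards [h, hm] with i h1 h2; rwa [← h1]⟩

lemma InfmlSeq.congr' {x y : ℕ → ℂ} (h : ∀ᶠ i in (𝒰 : Filter ℕ), x i = y i)
    (hx : InfmlSeq 𝒰 x) : InfmlSeq 𝒰 y := by
  intro ε hε
  filter_upwards [h, hx ε hε] with i h1 h2; rwa [← h1]

lemma BddSeq.constMul (c : ℂ) {x : ℕ → ℂ} (hx : BddSeq 𝒰 x) :
    BddSeq 𝒰 (fun i => c * x i) := by
  obtain ⟨m, hm⟩ := hx
  refine ⟨⌈(‖c‖) * m⌉₊, ?_⟩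
  filter_upwards [hm] with i hi
  calc ‖c * x i‖ = ‖c‖ * ‖x i‖ := norm_mul _ _
    _ ≤ ‖c‖ * m := by gcongr
    _ ≤ _ := Nat.le_ceil _

lemma InfmlSeq.constMul (c : ℂ) {x : ℕ → ℂ} (hx : InfmlSeq 𝒰 x) :
    InfmlSeq 𝒰 (fun i => c * x i) := by
  intro ε hε
  have hpos : 0 < ε / (‖c‖ + 1) := by positivity
  filter_upwards [hx _ hpos] with i hi
  have h1 : ‖c‖ + 1 ≠ 0 := by positivity
  calc ‖c * x i‖ = ‖c‖ * ‖x i‖ := norm_mul _ _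
    _ ≤ (‖c‖ + 1) * (ε / (‖c‖ + 1)) := by
        apply mul_le_mul (by linarith [norm_nonneg c]) hi
          (norm_nonneg _) (by positivity)
    _ = ε := by field_simp

lemma BddSeq.finsetSum {α : Type*} (s : Finset α) (f : α → ℕ → ℂ)
    (h : ∀ a ∈ s, BddSeq 𝒰 (f a)) : BddSeq 𝒰 (fun i => ∑ a ∈ s, f a i) := by
  classical
  induction s using Finset.induction_on with
  | empty => exact ⟨0, Filter.Eventually.of_forall fun i => by simp⟩
  | @insert a t ha ih =>
    obtain ⟨m1, hm1⟩ := h a (Finset.mem_insert_self a t)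
    obtain ⟨m2, hm2⟩ := ih fun b hb => h b (Finset.mem_insert_of_mem hb)
    refine ⟨m1 + m2, ?_⟩
    filter_upwards [hm1, hm2] with i h1 h2
    rw [Finset.sum_insert ha]
    calc ‖f a i + ∑ b ∈ t, f b i‖
        ≤ ‖f a i‖ + ‖∑ b ∈ t, f b i‖ := norm_add_le _ _
      _ ≤ (m1 : ℝ) + m2 := add_le_add h1 h2
      _ = ((m1 + m2 : ℕ) : ℝ) := by push_cast; ring

lemma InfmlSeq.finsetSum {α : Type*} (s : Finset α) (f : α → ℕ → ℂ)
    (h : ∀ a ∈ s, InfmlSeq 𝒰 (f a)) : InfmlSeq 𝒰 (fun i => ∑ a ∈ s, f a i) := by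
  classical
  induction s using Finset.induction_on with
  | empty => intro ε hε; exact Filter.Eventually.of_forall fun i => by simp; positivity
  | @insert a t ha ih =>
    intro ε hε
    have h2 := ih (fun b hb => h b (Finset.mem_insert_of_mem hb)) (ε/2) (by positivity)
    have h1 := h a (Finset.mem_insert_self a t) (ε/2) (by positivity)
    filter_upwards [h1, h2] with i h1 h2
    rw [Finset.sum_insert ha]
    calc ‖f a i + ∑ b ∈ t, f b i‖
        ≤ ‖f a i‖ + ‖∑ b ∈ t, f b i‖ := norm_add_le _ _
      _ ≤ ε/2 + ε/2 := add_le_add h1 h2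
      _ = ε := by ring

end helpers

lemma coeff_formula (n d : ℕ) (ν : Fin n →₀ ℕ) :
    ∃ (s : Finset (Fin n → ℂ)) (c : (Fin n → ℂ) → ℂ),
      ∀ q : MvPolynomial (Fin n) ℂ, q.totalDegree ≤ d →
        q.coeff ν = ∑ a ∈ s, c a * MvPolynomial.eval a q := by
  set V := MvPolynomial.restrictTotalDegree (Fin n) ℂ d with hV
  let E : (Fin n → ℂ) → Module.Dual ℂ V := fun a =>
    ((MvPolynomial.aeval a : MvPolynomial (Fin n) ℂ →ₐ[ℂ] ℂ).toLinearMap).comp V.subtype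
  have hspan : Submodule.span ℂ (Set.range E) = ⊤ := by
    have hco : (Submodule.span ℂ (Set.range E)).dualCoannihilator = ⊥ := by
      rw [eq_bot_iff]
      intro q hq
      have hmem : ∀ f ∈ Set.range E, f q = 0 := by
        have := Submodule.coe_dualCoannihilator_span (R := ℂ) (s := Set.range E)
        have h2 : q ∈ ((Submodule.span ℂ (Set.range E)).dualCoannihilator : Set V) := hq
        rw [this] at h2
        exact h2
      have hz : (q : MvPolynomial (Fin n) ℂ) = 0 := by
        apply MvPolynomial.funext
        intro x
        have := hmem (E x) ⟨x, rfl⟩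
        simpa [E] using this
      simpa [Submodule.mem_bot] using Subtype.ext hz
    have := (Subspace.dualCoannihilator_dualAnnihilator_eq
      (W := Submodule.span ℂ (Set.range E))).symm
    rw [this, hco, Submodule.dualAnnihilator_bot]
  let φ : Module.Dual ℂ V := (MvPolynomial.lcoeff ℂ ν).comp V.subtype
  have hφ : φ ∈ Submodule.span ℂ (Set.range E) := hspan ▸ Submodule.mem_top
  rw [Finsupp.mem_span_range_iff_exists_finsupp] at hφ
  obtain ⟨c, hc⟩ := hφ
  refine ⟨c.support, c, fun q hq => ?_⟩
  have hqV : q ∈ V := (MvPolynomial.mem_restrictTotalDegree _ _ _).2 hq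
  have := congrArg (fun f : Module.Dual ℂ V => f ⟨q, hqV⟩) hc
  simp only [Finsupp.sum, LinearMap.sum_apply, LinearMap.smul_apply] at this
  simpa [φ, E, MvPolynomial.lcoeff, smul_eq_mul, mul_comm] using this.symm

/-- The exponent grid of all multi-indices with each entry `≤ d`. -/
noncomputable def expGrid (n d : ℕ) : Finset (Fin n →₀ ℕ) :=
  Finset.Iic (Finsupp.equivFunOnFinite.symm fun _ => d)

lemma mem_expGrid {n d : ℕ} (ν : Fin n →₀ ℕ) : ν ∈ expGrid n d ↔ ∀ k, ν k ≤ d := by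
  simp [expGrid, Finset.mem_Iic, Finsupp.le_def]

lemma apply_le_degSum {n : ℕ} (ν : Fin n →₀ ℕ) (k : Fin n) :
    ν k ≤ ν.sum fun _ e => e := by
  rcases eq_or_ne (ν k) 0 with h | h
  · simp [h]
  · exact Finset.single_le_sum (fun _ _ => Nat.zero_le _) (Finsupp.mem_support_iff.2 h)

lemma support_subset_expGrid {n d : ℕ} (q : MvPolynomial (Fin n) ℂ)
    (hq : q.totalDegree ≤ d) : q.support ⊆ expGrid n d := by
  intro ν hν
  rw [mem_expGrid]
  intro k
  exact (apply_le_degSum ν k).trans ((MvPolynomial.le_totalDegree hν).trans hq)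

lemma eval_bound {n d : ℕ} (q : MvPolynomial (Fin n) ℂ) (hq : q.totalDegree ≤ d)
    (z : Fin n → ℂ) (M : ℝ) (hM : 0 ≤ M) (hz : ∀ k, ‖z k‖ ≤ M)
    (m : (Fin n →₀ ℕ) → ℝ)
    (hm : ∀ ν ∈ expGrid n d, ‖q.coeff ν‖ ≤ m ν) :
    ‖MvPolynomial.eval z q‖ ≤
      (∑ ν ∈ expGrid n d, m ν) * (M + 1) ^ (n * d) := by
  have hprod : ∀ ν ∈ expGrid n d,
      (∏ k, ‖z k‖ ^ ν k) ≤ (M + 1) ^ (n * d) := by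
    intro ν hν
    calc (∏ k, ‖z k‖ ^ ν k) ≤ ∏ k, (M + 1) ^ ν k := by
          apply Finset.prod_le_prod (fun k _ => by positivity)
          intro k _
          exact pow_le_pow_left₀ (norm_nonneg _) (by linarith [hz k]) _
      _ = (M + 1) ^ (∑ k, ν k) := Finset.prod_pow_eq_pow_sum _ _ _
      _ ≤ (M + 1) ^ (n * d) := by
          apply pow_le_pow_right₀ (by linarith)
          calc (∑ k, ν k) ≤ ∑ _k : Fin n, d :=
                Finset.sum_le_sum fun k _ => (mem_expGrid ν).1 hν k
            _ = n * d := by simp [Finset.sum_const, mul_comm]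
  rw [MvPolynomial.eval_eq']
  calc ‖∑ ν ∈ q.support, q.coeff ν * ∏ k, z k ^ ν k‖
      ≤ ∑ ν ∈ q.support, ‖q.coeff ν * ∏ k, z k ^ ν k‖ :=
        norm_sum_le _ _
    _ = ∑ ν ∈ q.support, ‖q.coeff ν‖ * ∏ k, ‖z k‖ ^ ν k := by
        apply Finset.sum_congr rfl; intro ν _; rw [norm_mul, norm_prod]
        simp [norm_pow]
    _ ≤ ∑ ν ∈ expGrid n d, ‖q.coeff ν‖ * ∏ k, ‖z k‖ ^ ν k := by
        apply Finset.sum_le_sum_of_subset_of_nonneg (support_subset_expGrid q hq)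
        intro ν _ _; positivity
    _ ≤ ∑ ν ∈ expGrid n d, m ν * (M + 1) ^ (n * d) := by
        apply Finset.sum_le_sum
        intro ν hν
        exact mul_le_mul (hm ν hν) (hprod ν hν) (by positivity)
          ((norm_nonneg _).trans (hm ν hν))
    _ = (∑ ν ∈ expGrid n d, m ν) * (M + 1) ^ (n * d) := (Finset.sum_mul _ _ _).symm


/-- **Bounded/infinitesimal internal polynomials of finite degree via coefficients.**
Let `P = [p i]` be an internal polynomial in `n` variables over `*ℂ` of standard
(finite) degree `d`, i.e. `totalDegree (p i) ≤ d` `𝒰`-a.e.  Then: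
`P` maps bounded points of `*ℂⁿ` to bounded points of `*ℂ` iff every coefficient
`a_ν` (for `|ν| ≤ d`) is a bounded element of `*ℂ`; and `P` maps bounded points to
infinitesimal points iff every coefficient `a_ν` (for `|ν| ≤ d`) is infinitesimal. -/
theorem finite_degree_internal_polynomial_bounded_iff_coeffs
    (𝒰 : Ultrafilter ℕ) (h𝒰 : ∀ a : ℕ, 𝒰 ≠ pure a) (n d : ℕ)
    (p : ℕ → MvPolynomial (Fin n) ℂ)
    (hdeg : ∀ᶠ i in (𝒰 : Filter ℕ), (p i).totalDegree ≤ d) :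
    ((∀ z : Fin n → ℕ → ℂ, (∀ k, BddSeq 𝒰 (z k)) →
        BddSeq 𝒰 fun i => MvPolynomial.eval (fun k => z k i) (p i)) ↔
      (∀ ν : Fin n →₀ ℕ, (ν.sum fun _ e => e) ≤ d →
        BddSeq 𝒰 fun i => (p i).coeff ν)) ∧
    ((∀ z : Fin n → ℕ → ℂ, (∀ k, BddSeq 𝒰 (z k)) →
        InfmlSeq 𝒰 fun i => MvPolynomial.eval (fun k => z k i) (p i)) ↔
      (∀ ν : Fin n →₀ ℕ, (ν.sum fun _ e => e) ≤ d →
        InfmlSeq 𝒰 fun i => (p i).coeff ν)) := by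
  classical
  have hconstBdd : ∀ a : Fin n → ℂ, ∀ k, BddSeq 𝒰 (fun _ => a k) := fun a k =>
    ⟨⌈‖a k‖⌉₊, Filter.Eventually.of_forall fun _ => Nat.le_ceil _⟩
  have hformula : ∀ ν : Fin n →₀ ℕ, ∃ (s : Finset (Fin n → ℂ)) (c : (Fin n → ℂ) → ℂ),
      ∀ᶠ i in (𝒰 : Filter ℕ),
        (p i).coeff ν = ∑ a ∈ s, c a * MvPolynomial.eval a (p i) := by
    intro ν
    obtain ⟨s, c, hf⟩ := coeff_formula n d ν
    exact ⟨s, c, by filter_upwards [hdeg] with i hi using hf _ hi⟩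
  have hzero : ∀ ν : Fin n →₀ ℕ, ¬ (ν.sum fun _ e => e) ≤ d →
      ∀ᶠ i in (𝒰 : Filter ℕ), (p i).coeff ν = 0 := by
    intro ν hν
    filter_upwards [hdeg] with i hi
    by_contra h
    exact hν ((MvPolynomial.le_totalDegree (MvPolynomial.mem_support_iff.2 h)).trans hi)
  refine ⟨⟨?_, ?_⟩, ⟨?_, ?_⟩⟩
  · -- eval bdd → coeff bdd
    intro hyp ν _
    obtain ⟨s, c, hf⟩ := hformula ν
    refine BddSeq.congr' (by filter_upwards [hf] with i hi using hi.symm) ?_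
    exact BddSeq.finsetSum s _ fun a _ =>
      BddSeq.constMul (c a) (hyp (fun k _ => a k) (hconstBdd a))
  · -- coeff bdd → eval bdd
    intro hco z hz
    have hco' : ∀ ν : Fin n →₀ ℕ, BddSeq 𝒰 fun i => (p i).coeff ν := by
      intro ν
      by_cases hν : (ν.sum fun _ e => e) ≤ d
      · exact hco ν hν
      · exact ⟨0, by filter_upwards [hzero ν hν] with i hi; simp [hi]⟩
    choose m hm using hco'
    choose Mk hMk using hz
    set M : ℕ := ∑ k, Mk k with hMdef
    have hMk' : ∀ᶠ i in (𝒰 : Filter ℕ), ∀ k, ‖z k i‖ ≤ (M : ℝ) := by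
      rw [Filter.eventually_all]
      intro k
      filter_upwards [hMk k] with i hi
      exact hi.trans (Nat.cast_le.2
        (Finset.single_le_sum (fun _ _ => Nat.zero_le _) (Finset.mem_univ k)))
    have hmT : ∀ᶠ i in (𝒰 : Filter ℕ), ∀ ν ∈ expGrid n d,
        ‖(p i).coeff ν‖ ≤ ((m ν : ℕ) : ℝ) := by
      rw [Filter.eventually_all_finset]
      exact fun ν _ => hm ν
    refine ⟨⌈(∑ ν ∈ expGrid n d, ((m ν : ℕ) : ℝ)) * ((M : ℝ) + 1) ^ (n * d)⌉₊, ?_⟩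
    filter_upwards [hdeg, hMk', hmT] with i h1 h2 h3
    exact (eval_bound (p i) h1 _ (M : ℝ) (by positivity) h2 _ h3).trans (Nat.le_ceil _)
  · -- eval infml → coeff infml
    intro hyp ν _
    obtain ⟨s, c, hf⟩ := hformula ν
    refine InfmlSeq.congr' (by filter_upwards [hf] with i hi using hi.symm) ?_
    exact InfmlSeq.finsetSum s _ fun a _ =>
      InfmlSeq.constMul (c a) (hyp (fun k _ => a k) (hconstBdd a))
  · -- coeff infml → eval infml
    intro hco z hz
    have hco' : ∀ ν : Fin n →₀ ℕ, InfmlSeq 𝒰 fun i => (p i).coeff ν := by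
      intro ν
      by_cases hν : (ν.sum fun _ e => e) ≤ d
      · exact hco ν hν
      · intro ε hε
        filter_upwards [hzero ν hν] with i hi
        simp [hi, hε.le]
    choose Mk hMk using hz
    set M : ℕ := ∑ k, Mk k with hMdef
    have hMk' : ∀ᶠ i in (𝒰 : Filter ℕ), ∀ k, ‖z k i‖ ≤ (M : ℝ) := by
      rw [Filter.eventually_all]
      intro k
      filter_upwards [hMk k] with i hi
      exact hi.trans (Nat.cast_le.2
        (Finset.single_le_sum (fun _ _ => Nat.zero_le _) (Finset.mem_univ k)))
    intro ε hε
    set C : ℝ := ((M : ℝ) + 1) ^ (n * d) with hC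
    have hCpos : 0 < C := by positivity
    set t : ℕ := (expGrid n d).card with ht
    have hε' : 0 < ε / ((t + 1) * C) := by positivity
    have hmT : ∀ᶠ i in (𝒰 : Filter ℕ), ∀ ν ∈ expGrid n d,
        ‖(p i).coeff ν‖ ≤ ε / ((t + 1) * C) := by
      rw [Filter.eventually_all_finset]
      exact fun ν _ => hco' ν _ hε'
    filter_upwards [hdeg, hMk', hmT] with i h1 h2 h3
    refine (eval_bound (p i) h1 _ (M : ℝ) (by positivity) h2 _ h3).trans ?_
    have hsum : (∑ _ν ∈ expGrid n d, ε / ((t + 1) * C)) = t * (ε / ((t + 1) * C)) := by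
      rw [Finset.sum_const, nsmul_eq_mul, ht]
    rw [hsum]
    have heq : (t : ℝ) * (ε / ((t + 1) * C)) * C = (t : ℝ) * ε / (t + 1) := by
      field_simp
    rw [heq, div_le_iff₀ (by positivity)]
    nlinarith [hε.le]
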